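/- The region Ω = {(S_h,E_h,I_h,R_h) : S_h,E_h,I_h,R_h ≥ 0 and S_h+E_h+I_h+R_h = N_h} is positively invariant for the human subsystem of the dengue model: if the initial condition lies in Ω, the solution remains in Ω for all t ≥ 0. -/

import Mathlib

lemma aux_nonneg (f a r : ℝ → ℝ) (ha : Continuous a)
    (hr : ∀ t ≥ (0:ℝ), 0 ≤ r t)
    (hf : ∀ t ≥ (0:ℝ), HasDerivAt f (r t - a t * f t) t)
    (h0 : 0 ≤ f 0) : ∀ t ≥ (0:ℝ), 0 ≤ f t := by
  set A : ℝ → ℝ := fun t => ∫ s in (0:ℝ)..t, a s with hAdef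
  have hA : ∀ t, HasDerivAt A (a t) t := fun t =>
    (ha.integral_hasStrictDerivAt 0 t).hasDerivAt
  set g : ℝ → ℝ := fun t => Real.exp (A t) * f t with hgdef
  have hg : ∀ t ≥ (0:ℝ), HasDerivAt g (Real.exp (A t) * r t) t := by
    intro t ht
    have := ((hA t).exp.mul (hf t ht))
    exact this.congr_deriv (by ring)
  have hmono : MonotoneOn g (Set.Ici (0:ℝ)) := by
    apply monotoneOn_of_deriv_nonneg (convex_Ici 0)
    · exact fun t ht => ((hg t ht).continuousAt).continuousWithinAt
    · intro t ht
      rw [interior_Ici] at ht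
      exact ((hg t (le_of_lt ht)).differentiableAt).differentiableWithinAt
    · intro t ht
      rw [interior_Ici] at ht
      rw [(hg t (le_of_lt ht)).deriv]
      have := hr t (le_of_lt ht)
      positivity
  intro t ht
  have h1 : g 0 ≤ g t := hmono Set.self_mem_Ici ht ht
  have h2 : g 0 = f 0 := by
    simp [hgdef, hAdef, intervalIntegral.integral_same]
  have h3 : (0:ℝ) ≤ g t := by rw [← h2] at h0; exact le_trans h0 h1
  have h4 : g t = Real.exp (A t) * f t := rfl
  rw [h4] at h3
  nlinarith [Real.exp_pos (A t)]

theorem human_region_positively_invariant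
    (Sh Eh Ih Rh Im : ℝ → ℝ)
    (μh νh ηh B βmh Nh : ℝ)
    (hμh : 0 < μh) (hνh : 0 < νh) (hηh : 0 < ηh) (hB : 0 < B) (hβmh : 0 < βmh)
    (hNh : 0 < Nh)
    (hImcont : Continuous Im) (hImnn : ∀ t, 0 ≤ Im t)
    (hSh : ∀ t ≥ (0:ℝ), HasDerivAt Sh (μh * Nh - (B * βmh * Im t / Nh + μh) * Sh t) t)
    (hEh : ∀ t ≥ (0:ℝ), HasDerivAt Eh (B * βmh * Im t / Nh * Sh t - (νh + μh) * Eh t) t)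
    (hIh : ∀ t ≥ (0:ℝ), HasDerivAt Ih (νh * Eh t - (ηh + μh) * Ih t) t)
    (hRh : ∀ t ≥ (0:ℝ), HasDerivAt Rh (ηh * Ih t - μh * Rh t) t)
    (h0 : 0 ≤ Sh 0 ∧ 0 ≤ Eh 0 ∧ 0 ≤ Ih 0 ∧ 0 ≤ Rh 0 ∧
          Sh 0 + Eh 0 + Ih 0 + Rh 0 = Nh) :
    ∀ t ≥ (0:ℝ), 0 ≤ Sh t ∧ 0 ≤ Eh t ∧ 0 ≤ Ih t ∧ 0 ≤ Rh t ∧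
      Sh t + Eh t + Ih t + Rh t = Nh := by
  obtain ⟨hS0, hE0, hI0, hR0, hsum0⟩ := h0
  -- Sh nonneg
  have hShnn : ∀ t ≥ (0:ℝ), 0 ≤ Sh t := by
    apply aux_nonneg Sh (fun t => B * βmh * Im t / Nh + μh) (fun _ => μh * Nh)
    · fun_prop
    · intro t _; positivity
    · exact hSh
    · exact hS0
  -- Eh nonneg
  have hEhnn : ∀ t ≥ (0:ℝ), 0 ≤ Eh t := by
    apply aux_nonneg Eh (fun _ => νh + μh) (fun t => B * βmh * Im t / Nh * Sh t)
    · exact continuous_const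
    · intro t ht
      have h1 := hShnn t ht
      have h2 := hImnn t
      positivity
    · exact hEh
    · exact hE0
  -- Ih nonneg
  have hIhnn : ∀ t ≥ (0:ℝ), 0 ≤ Ih t := by
    apply aux_nonneg Ih (fun _ => ηh + μh) (fun t => νh * Eh t)
    · exact continuous_const
    · intro t ht; have := hEhnn t ht; positivity
    · exact hIh
    · exact hI0
  -- Rh nonneg
  have hRhnn : ∀ t ≥ (0:ℝ), 0 ≤ Rh t := by
    apply aux_nonneg Rh (fun _ => μh) (fun t => ηh * Ih t)
    · exact continuous_const
    · intro t ht; have := hIhnn t ht; positivity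
    · exact hRh
    · exact hR0
  -- sum conservation
  have hDsum : ∀ t ≥ (0:ℝ), HasDerivAt (fun t => Sh t + Eh t + Ih t + Rh t - Nh)
      ((0:ℝ) - μh * (Sh t + Eh t + Ih t + Rh t - Nh)) t := by
    intro t ht
    have := ((((hSh t ht).add (hEh t ht)).add (hIh t ht)).add (hRh t ht)).sub_const Nh
    exact this.congr_deriv (by ring)
  have hge : ∀ t ≥ (0:ℝ), 0 ≤ Sh t + Eh t + Ih t + Rh t - Nh := by
    apply aux_nonneg _ (fun _ => μh) (fun _ => (0:ℝ)) continuous_const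
      (fun _ _ => le_refl 0) hDsum
    simp [hsum0]
  have hle : ∀ t ≥ (0:ℝ), 0 ≤ Nh - (Sh t + Eh t + Ih t + Rh t) := by
    apply aux_nonneg (fun t => Nh - (Sh t + Eh t + Ih t + Rh t)) (fun _ => μh)
      (fun _ => (0:ℝ)) continuous_const (fun _ _ => le_refl 0)
    · intro t ht
      have := (hDsum t ht).neg
      refine (this.congr_deriv (by ring)).congr_of_eventuallyEq (Filter.Eventually.of_forall fun s => ?_)
      simp only [Pi.neg_apply]; ring
    · simp [hsum0]
  intro t ht
  refine ⟨hShnn t ht, hEhnn t ht, hIhnn t ht, hRhnn t ht, ?_⟩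
  have h1 := hge t ht
  have h2 := hle t ht
  linarith
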